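/- Let k ≥ 1 and ξ ∈ ℝ^{2n} with ξ orthogonal to V_{k−1}. Then as t → 0⁺ the short-time expansion ξ·D_t ξ = [((F^T)^k ξ)·M((F^T)^k ξ) / ((2k+1)(k!)²)] · t^{2k+1} + O(t^{2k+2}) holds (i.e. there exist C, t₀ > 0 bounding the remainder by C t^{2k+2} for 0 ≤ t ≤ t₀). -/

import Mathlib

open Matrix MeasureTheory intervalIntegral

set_option maxHeartbeats 1000000 in
open NormedSpace in
lemma exp_smul_sub_partial_bound {𝔸 : Type*} [NormedRing 𝔸] [NormedAlgebra ℝ 𝔸] [CompleteSpace 𝔸]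
    (B : 𝔸) (k : ℕ) {s : ℝ} (h0 : 0 ≤ s) (h1 : s ≤ 1) :
    ‖exp (s • B) - ∑ j ∈ Finset.range (k + 1), (s ^ j / (j.factorial : ℝ)) • B ^ j‖ ≤
      Real.exp ‖B‖ * s ^ (k + 1) := by
  have hterm : ∀ m : ℕ, ((m.factorial : ℝ)⁻¹) • (s • B) ^ m = (s ^ m / (m.factorial : ℝ)) • B ^ m := by
    intro m
    rw [smul_pow, smul_smul, div_eq_mul_inv, mul_comm]
  have hsum : Summable fun m : ℕ => (s ^ m / (m.factorial : ℝ)) • B ^ m :=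
    (NormedSpace.expSeries_summable' (𝕂 := ℝ) (s • B)).congr hterm
  have hnormsum : Summable fun m : ℕ => ‖(s ^ m / (m.factorial : ℝ)) • B ^ m‖ :=
    (NormedSpace.norm_expSeries_summable' (𝕂 := ℝ) (s • B)).congr fun m => by rw [hterm m]
  have hexp : exp (s • B) = ∑' m : ℕ, (s ^ m / (m.factorial : ℝ)) • B ^ m := by
    rw [exp_eq_tsum (𝕂 := ℝ)]; exact tsum_congr hterm
  have hsplit := Summable.sum_add_tsum_nat_add
    (f := fun m : ℕ => (s ^ m / (m.factorial : ℝ)) • B ^ m) (k + 1) hsum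
  have hdiff : exp (s • B) - ∑ j ∈ Finset.range (k + 1), (s ^ j / (j.factorial : ℝ)) • B ^ j
      = ∑' m : ℕ, (s ^ (m + (k + 1)) / ((m + (k + 1)).factorial : ℝ)) • B ^ (m + (k + 1)) := by
    rw [hexp, ← hsplit, add_sub_cancel_left]
  rw [hdiff]
  have hb : ∀ m : ℕ, ‖(s ^ (m + (k + 1)) / ((m + (k + 1)).factorial : ℝ)) • B ^ (m + (k + 1))‖ ≤
      s ^ (k + 1) * (‖B‖ ^ (m + (k + 1)) / ((m + (k + 1)).factorial : ℝ)) := by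
    intro m
    rw [norm_smul, Real.norm_eq_abs, abs_of_nonneg (by positivity)]
    have hfpos : (0:ℝ) < ((m + (k + 1)).factorial : ℝ) := by
      exact_mod_cast (m + (k + 1)).factorial_pos
    have h2 : ‖B ^ (m + (k + 1))‖ ≤ ‖B‖ ^ (m + (k + 1)) := norm_pow_le' B (by omega)
    have h3 : s ^ (m + (k + 1)) ≤ s ^ (k + 1) := pow_le_pow_of_le_one h0 h1 (by omega)
    have h4 : s ^ (m + (k + 1)) / ((m + (k + 1)).factorial : ℝ)
        ≤ s ^ (k + 1) / ((m + (k + 1)).factorial : ℝ) := by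
      exact div_le_div_of_nonneg_right h3 hfpos.le
    calc s ^ (m + (k + 1)) / ((m + (k + 1)).factorial : ℝ) * ‖B ^ (m + (k + 1))‖
        ≤ s ^ (k + 1) / ((m + (k + 1)).factorial : ℝ) * ‖B‖ ^ (m + (k + 1)) :=
          mul_le_mul h4 h2 (norm_nonneg _) (by positivity)
      _ = s ^ (k + 1) * (‖B‖ ^ (m + (k + 1)) / ((m + (k + 1)).factorial : ℝ)) := by ring
  have hsum2 : Summable (fun m : ℕ => ‖B‖ ^ m / (m.factorial : ℝ)) :=
    Real.summable_pow_div_factorial _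
  have hsum2t : Summable (fun m : ℕ => ‖B‖ ^ (m + (k + 1)) / ((m + (k + 1)).factorial : ℝ)) :=
    (summable_nat_add_iff (k + 1)).2 hsum2
  have hsum2' : Summable (fun m : ℕ =>
      s ^ (k + 1) * (‖B‖ ^ (m + (k + 1)) / ((m + (k + 1)).factorial : ℝ))) :=
    hsum2t.mul_left _
  have hnorm_tail : Summable fun m : ℕ =>
      ‖(s ^ (m + (k + 1)) / ((m + (k + 1)).factorial : ℝ)) • B ^ (m + (k + 1))‖ :=
    (summable_nat_add_iff (k + 1)).2 hnormsum
  have htail_le : ∑' m : ℕ, ‖B‖ ^ (m + (k + 1)) / ((m + (k + 1)).factorial : ℝ) ≤ Real.exp ‖B‖ := by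
    have hsplit2 := Summable.sum_add_tsum_nat_add
      (f := fun m : ℕ => ‖B‖ ^ m / (m.factorial : ℝ)) (k + 1) hsum2
    have hexpR : ∑' m : ℕ, ‖B‖ ^ m / (m.factorial : ℝ) = Real.exp ‖B‖ := by
      rw [Real.exp_eq_exp_ℝ, NormedSpace.exp_eq_tsum_div]
    have hpart : (0:ℝ) ≤ ∑ j ∈ Finset.range (k + 1), ‖B‖ ^ j / (j.factorial : ℝ) := by
      apply Finset.sum_nonneg; intro j _; positivity
    rw [hexpR] at hsplit2
    linarith
  calc ‖∑' m : ℕ, (s ^ (m + (k + 1)) / ((m + (k + 1)).factorial : ℝ)) • B ^ (m + (k + 1))‖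
      ≤ ∑' m : ℕ, ‖(s ^ (m + (k + 1)) / ((m + (k + 1)).factorial : ℝ)) • B ^ (m + (k + 1))‖ :=
        norm_tsum_le_tsum_norm hnorm_tail
    _ ≤ ∑' m : ℕ, s ^ (k + 1) * (‖B‖ ^ (m + (k + 1)) / ((m + (k + 1)).factorial : ℝ)) :=
        Summable.tsum_le_tsum hb hnorm_tail hsum2'
    _ = s ^ (k + 1) * ∑' m : ℕ, ‖B‖ ^ (m + (k + 1)) / ((m + (k + 1)).factorial : ℝ) := tsum_mul_left
    _ ≤ s ^ (k + 1) * Real.exp ‖B‖ :=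
        mul_le_mul_of_nonneg_left htail_le (pow_nonneg h0 _)
    _ = Real.exp ‖B‖ * s ^ (k + 1) := mul_comm _ _

lemma abs_dot_le {ι : Type*} [Fintype ι] (a b : ι → ℝ) :
    |a ⬝ᵥ b| ≤ (Fintype.card ι : ℝ) * ‖a‖ * ‖b‖ := by
  classical
  calc |∑ i, a i * b i| ≤ ∑ i, |a i * b i| := Finset.abs_sum_le_sum_abs _ _
    _ ≤ ∑ _i : ι, ‖a‖ * ‖b‖ := by
        refine Finset.sum_le_sum fun i _ => ?_
        rw [abs_mul]
        exact mul_le_mul (by simpa using norm_le_pi_norm a i)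
          (by simpa using norm_le_pi_norm b i) (abs_nonneg _) (norm_nonneg _)
    _ = (Fintype.card ι : ℝ) * ‖a‖ * ‖b‖ := by
        rw [Finset.sum_const, Finset.card_univ, nsmul_eq_mul, mul_assoc]

lemma vecMulVec_mulVec_eq {ι : Type*} [Fintype ι] (a b v : ι → ℝ) :
    (Matrix.vecMulVec a b).mulVec v = (b ⬝ᵥ v) • a := by
  funext i
  simp only [Matrix.mulVec, dotProduct, Matrix.vecMulVec_apply, Pi.smul_apply,
    smul_eq_mul]
  rw [Finset.sum_mul]
  exact Finset.sum_congr rfl fun j _ => by ring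

lemma sum_mulVec' {ι κ : Type*} [Fintype ι] (f : κ → Matrix ι ι ℝ) (s : Finset κ) (v : ι → ℝ) :
    (∑ x ∈ s, f x).mulVec v = ∑ x ∈ s, (f x).mulVec v := by
  classical
  induction s using Finset.cons_induction with
  | empty => simp [Matrix.zero_mulVec]
  | cons a s ha ih => simp [Finset.sum_insert ha, Matrix.add_mulVec, ih]

set_option maxHeartbeats 1000000 in
/-- if `ξ ⊥ V_{k-1}` (k ≥ 1), then as `t → 0⁺`,
`ξ·D_t ξ = [((Fᵀ)ᵏξ)·M((Fᵀ)ᵏξ) / ((2k+1)(k!)²)] t^{2k+1} + O(t^{2k+2})`. -/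
theorem short_time_expansion_order_k (n K : ℕ) (hn : 1 ≤ n)
    (Ω : Matrix (Fin n ⊕ Fin n) (Fin n ⊕ Fin n) ℝ)
    (hΩ : Ω = Matrix.fromBlocks 0 (-1) 1 0)
    (Q : Matrix (Fin n ⊕ Fin n) (Fin n ⊕ Fin n) ℝ) (hQ : Q.IsSymm)
    (F : Matrix (Fin n ⊕ Fin n) (Fin n ⊕ Fin n) ℝ) (hF : F = Ω * Q)
    (l : Fin K → (Fin n ⊕ Fin n) → ℂ)
    (M : Matrix (Fin n ⊕ Fin n) (Fin n ⊕ Fin n) ℝ)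
    (hM : M = ∑ k, (vecMulVec (fun i => (l k i).re) (fun i => (l k i).re)
                  + vecMulVec (fun i => (l k i).im) (fun i => (l k i).im)))
    (N : Matrix (Fin n ⊕ Fin n) (Fin n ⊕ Fin n) ℝ)
    (hN : N = ∑ k, (vecMulVec (fun i => (l k i).re) (fun i => (l k i).im)
                  - vecMulVec (fun i => (l k i).im) (fun i => (l k i).re)))
    (A : Matrix (Fin n ⊕ Fin n) (Fin n ⊕ Fin n) ℝ) (hA : A = F + N * Ω)
    (V₀ : Submodule ℝ ((Fin n ⊕ Fin n) → ℝ))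
    (hV₀ : V₀ = Submodule.span ℝ
      (Set.range (fun k => fun i => (l k i).re) ∪ Set.range (fun k => fun i => (l k i).im)))
    (V : ℕ → Submodule ℝ ((Fin n ⊕ Fin n) → ℝ))
    (hV : ∀ j : ℕ, V j = ⨆ m ∈ Finset.range (j + 1), Submodule.map (F ^ m).mulVecLin V₀)
    (R : ℝ → Matrix (Fin n ⊕ Fin n) (Fin n ⊕ Fin n) ℝ)
    (hR : ∀ t, R t = NormedSpace.exp (t • A))
    (D : ℝ → Matrix (Fin n ⊕ Fin n) (Fin n ⊕ Fin n) ℝ)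
    (hD : ∀ t, D t = Matrix.of fun i j => ∫ s in (0:ℝ)..t, (R s * M * (R s)ᵀ) i j)
    (k : ℕ) (hk : 1 ≤ k)
    (ξ : (Fin n ⊕ Fin n) → ℝ) (hξ : ∀ v ∈ V (k - 1), ξ ⬝ᵥ v = 0) :
    ∃ C t₀ : ℝ, 0 < C ∧ 0 < t₀ ∧ ∀ t : ℝ, 0 ≤ t → t ≤ t₀ →
      |ξ ⬝ᵥ (D t).mulVec ξ -
        ((((Fᵀ) ^ k).mulVec ξ ⬝ᵥ M.mulVec (((Fᵀ) ^ k).mulVec ξ)) /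
          ((2 * k + 1) * (Nat.factorial k) ^ 2)) * t ^ (2 * k + 1)| ≤
        C * t ^ (2 * k + 2) := by
  classical
  -- the vectors u j = (Fᵀ)^j ξ
  set u : ℕ → (Fin n ⊕ Fin n) → ℝ := fun j => ((Fᵀ) ^ j).mulVec ξ with hu_def
  -- generators of V₀
  have hre : ∀ κ : Fin K, (fun i => (l κ i).re) ∈ V₀ := fun κ =>
    hV₀ ▸ Submodule.subset_span (Or.inl ⟨κ, rfl⟩)
  have him : ∀ κ : Fin K, (fun i => (l κ i).im) ∈ V₀ := fun κ =>
    hV₀ ▸ Submodule.subset_span (Or.inr ⟨κ, rfl⟩)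
  -- orthogonality
  have hperp : ∀ j, j < k → ∀ w, w ∈ V₀ → u j ⬝ᵥ w = 0 := by
    intro j hj w hw
    have h1 : u j ⬝ᵥ w = ξ ⬝ᵥ (F ^ j).mulVec w := by
      have h2 : u j = ((F ^ j)ᵀ).mulVec ξ := by rw [hu_def]; rw [Matrix.transpose_pow]
      rw [h2, Matrix.mulVec_transpose, ← Matrix.dotProduct_mulVec]
    rw [h1]
    apply hξ
    have hmem : (F ^ j).mulVec w ∈ Submodule.map (F ^ j).mulVecLin V₀ :=
      ⟨w, hw, by simp [Matrix.mulVecLin_apply]⟩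
    have hle : Submodule.map (F ^ j).mulVecLin V₀ ≤ V (k - 1) := by
      rw [hV (k - 1)]
      exact le_iSup₂ (f := fun m (_ : m ∈ Finset.range (k - 1 + 1)) =>
        Submodule.map (F ^ m).mulVecLin V₀) j (by simp only [Finset.mem_range]; omega)
    exact hle hmem
  -- M is symmetric
  have hMsymm : Mᵀ = M := by
    rw [hM]; ext i j
    simp only [Matrix.transpose_apply, Matrix.sum_apply, Matrix.add_apply,
      Matrix.vecMulVec_apply]
    exact Finset.sum_congr rfl fun κ _ => by ring
  -- M kills u j for j < k
  have hMu : ∀ j, j < k → M.mulVec (u j) = 0 := by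
    intro j hj
    rw [hM, sum_mulVec']
    refine Finset.sum_eq_zero fun κ _ => ?_
    rw [Matrix.add_mulVec, vecMulVec_mulVec_eq, vecMulVec_mulVec_eq,
      dotProduct_comm, hperp j hj _ (hre κ),
      dotProduct_comm, hperp j hj _ (him κ)]
    simp
  -- Nᵀ kills u j for j < k
  have hNT : Nᵀ = ∑ κ, (vecMulVec (fun i => (l κ i).im) (fun i => (l κ i).re)
      - vecMulVec (fun i => (l κ i).re) (fun i => (l κ i).im)) := by
    rw [hN]; ext i j
    simp only [Matrix.transpose_apply, Matrix.sum_apply, Matrix.sub_apply,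
      Matrix.vecMulVec_apply]
    exact Finset.sum_congr rfl fun κ _ => by ring
  have hNu : ∀ j, j < k → Nᵀ.mulVec (u j) = 0 := by
    intro j hj
    rw [hNT, sum_mulVec']
    refine Finset.sum_eq_zero fun κ _ => ?_
    rw [Matrix.sub_mulVec, vecMulVec_mulVec_eq, vecMulVec_mulVec_eq,
      dotProduct_comm, hperp j hj _ (hre κ),
      dotProduct_comm, hperp j hj _ (him κ)]
    simp
  -- powers of Aᵀ on ξ agree with powers of Fᵀ
  have hAu : ∀ j, j ≤ k → ((Aᵀ) ^ j).mulVec ξ = u j := by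
    intro j hj
    induction j with
    | zero => simp [hu_def]
    | succ j ih =>
      have ihv := ih (by omega)
      rw [pow_succ', ← Matrix.mulVec_mulVec, ihv]
      have hAT : Aᵀ = Fᵀ + Ωᵀ * Nᵀ := by
        rw [hA, Matrix.transpose_add, Matrix.transpose_mul]
      rw [hAT, Matrix.add_mulVec, ← Matrix.mulVec_mulVec, hNu j (by omega),
        Matrix.mulVec_zero, add_zero, hu_def]
      show Fᵀ.mulVec (((Fᵀ) ^ j).mulVec ξ) = ((Fᵀ) ^ (j + 1)).mulVec ξ
      rw [Matrix.mulVec_mulVec, ← pow_succ']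
  -- now the analytic part
  letI : SeminormedRing (Matrix (Fin n ⊕ Fin n) (Fin n ⊕ Fin n) ℝ) := Matrix.linftyOpSemiNormedRing
  letI : NormedRing (Matrix (Fin n ⊕ Fin n) (Fin n ⊕ Fin n) ℝ) := Matrix.linftyOpNormedRing
  letI : NormedAlgebra ℝ (Matrix (Fin n ⊕ Fin n) (Fin n ⊕ Fin n) ℝ) := Matrix.linftyOpNormedAlgebra
  -- continuity of R and of the integrand matrix
  have hRc : Continuous R := by
    have hfun : R = fun s : ℝ => NormedSpace.exp (s • A) := funext hR
    rw [hfun]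
    have hec : Continuous (NormedSpace.exp : Matrix (Fin n ⊕ Fin n) (Fin n ⊕ Fin n) ℝ → _) := by
      rw [← continuousOn_univ, ← Metric.eball_top_eq_univ (0 : Matrix (Fin n ⊕ Fin n) (Fin n ⊕ Fin n) ℝ),
        ← NormedSpace.expSeries_radius_eq_top ℝ (Matrix (Fin n ⊕ Fin n) (Fin n ⊕ Fin n) ℝ)]
      exact NormedSpace.continuousOn_exp
    exact hec.comp (continuous_id.smul continuous_const)
  have hcont : Continuous fun s => R s * M * (R s)ᵀ :=
    (hRc.matrix_mul continuous_const).matrix_mul hRc.matrix_transpose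
  have hw : ∀ s : ℝ, (R s)ᵀ.mulVec ξ = (NormedSpace.exp (s • Aᵀ)).mulVec ξ := by
    intro s
    rw [hR s, ← Matrix.exp_transpose, Matrix.transpose_smul]
  -- the polynomial approximation
  set p : ℝ → (Fin n ⊕ Fin n) → ℝ :=
    fun s => ∑ j ∈ Finset.range (k + 1), (s ^ j / (j.factorial : ℝ)) • u j with hp_def
  have hpmat : ∀ s : ℝ,
      (∑ j ∈ Finset.range (k + 1), (s ^ j / (j.factorial : ℝ)) • (Aᵀ) ^ j).mulVec ξ = p s := by
    intro s
    rw [sum_mulVec', hp_def]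
    refine Finset.sum_congr rfl fun j hj => ?_
    rw [Matrix.smul_mulVec, hAu j (by rw [Finset.mem_range] at hj; omega)]
  have he : ∀ s : ℝ, 0 ≤ s → s ≤ 1 →
      ‖(R s)ᵀ.mulVec ξ - p s‖ ≤ (Real.exp ‖Aᵀ‖ * ‖ξ‖) * s ^ (k + 1) := by
    intro s h0 h1
    rw [hw s, ← hpmat s, ← Matrix.sub_mulVec]
    calc ‖(NormedSpace.exp (s • Aᵀ)
            - ∑ j ∈ Finset.range (k + 1), (s ^ j / (j.factorial : ℝ)) • (Aᵀ) ^ j).mulVec ξ‖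
        ≤ ‖NormedSpace.exp (s • Aᵀ)
            - ∑ j ∈ Finset.range (k + 1), (s ^ j / (j.factorial : ℝ)) • (Aᵀ) ^ j‖ * ‖ξ‖ :=
          Matrix.linfty_opNorm_mulVec _ _
      _ ≤ (Real.exp ‖Aᵀ‖ * s ^ (k + 1)) * ‖ξ‖ :=
          mul_le_mul_of_nonneg_right (exp_smul_sub_partial_bound (Aᵀ) k h0 h1) (norm_nonneg _)
      _ = (Real.exp ‖Aᵀ‖ * ‖ξ‖) * s ^ (k + 1) := by ring
  have hMp : ∀ s : ℝ, M.mulVec (p s) = (s ^ k / (k.factorial : ℝ)) • M.mulVec (u k) := by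
    intro s
    have hlin : M.mulVec (∑ j ∈ Finset.range (k + 1), (s ^ j / (j.factorial : ℝ)) • u j)
        = ∑ j ∈ Finset.range (k + 1), (s ^ j / (j.factorial : ℝ)) • M.mulVec (u j) := by
      simp only [← Matrix.mulVecLin_apply, map_sum, LinearMap.map_smul]
    have hsingle : ∑ j ∈ Finset.range (k + 1), (s ^ j / (j.factorial : ℝ)) • M.mulVec (u j)
        = (s ^ k / (k.factorial : ℝ)) • M.mulVec (u k) :=
      Finset.sum_eq_single_of_mem k (Finset.self_mem_range_succ k) fun j hjm hjk => by
        rw [hMu j (by rw [Finset.mem_range] at hjm; omega), smul_zero]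
    rw [hp_def]
    rw [hlin, hsingle]
  have hsym : ∀ v w : (Fin n ⊕ Fin n) → ℝ, v ⬝ᵥ M.mulVec w = M.mulVec v ⬝ᵥ w := by
    intro v w
    rw [Matrix.dotProduct_mulVec, ← Matrix.mulVec_transpose, hMsymm]
  have hfk : ((k.factorial : ℝ)) ≠ 0 := Nat.cast_ne_zero.2 k.factorial_ne_zero
  have hfk1 : (1:ℝ) ≤ (k.factorial : ℝ) := Nat.one_le_cast.2 k.factorial_pos
  -- constants
  set card : ℝ := (Fintype.card (Fin n ⊕ Fin n) : ℝ) with hcard_def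
  have hcard0 : 0 ≤ card := by rw [hcard_def]; positivity
  set c₁ : ℝ := Real.exp ‖Aᵀ‖ * ‖ξ‖ with hc₁_def
  have hc₁ : 0 ≤ c₁ := by rw [hc₁_def]; positivity
  set cM : ℝ := ‖M.mulVec (u k)‖ with hcM_def
  have hcM0 : 0 ≤ cM := by rw [hcM_def]; positivity
  set Cg : ℝ := 2 * card * cM * c₁ + card * ‖M‖ * c₁ ^ 2 with hCg_def
  have hCg : 0 ≤ Cg := by
    rw [hCg_def]
    have h1 : (0:ℝ) ≤ 2 * card * cM * c₁ := by positivity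
    have h2 : (0:ℝ) ≤ card * ‖M‖ * c₁ ^ 2 := by positivity
    linarith
  -- the central pointwise bound
  have hgb : ∀ s : ℝ, 0 ≤ s → s ≤ 1 →
      |((R s)ᵀ.mulVec ξ) ⬝ᵥ M.mulVec ((R s)ᵀ.mulVec ξ) -
        (u k ⬝ᵥ M.mulVec (u k)) / ((k.factorial : ℝ)) ^ 2 * s ^ (2 * k)| ≤ Cg * s ^ (2 * k + 1) := by
    intro s h0 h1
    set ws := (R s)ᵀ.mulVec ξ with hws_def
    have hes : ‖ws - p s‖ ≤ c₁ * s ^ (k + 1) := he s h0 h1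
    set es := ws - p s with hes_def
    have hwsplit : ws = p s + es := by rw [hes_def]; abel
    have hq1 : p s ⬝ᵥ M.mulVec (p s)
        = (u k ⬝ᵥ M.mulVec (u k)) / ((k.factorial : ℝ)) ^ 2 * s ^ (2 * k) := by
      rw [hMp s, dotProduct_smul, hsym, hMp s, smul_dotProduct]
      rw [← hsym]
      simp only [smul_eq_mul]
      field_simp
      ring
    have hexpand : ws ⬝ᵥ M.mulVec ws
        = p s ⬝ᵥ M.mulVec (p s) + (p s ⬝ᵥ M.mulVec es +
          (es ⬝ᵥ M.mulVec (p s) + es ⬝ᵥ M.mulVec es)) := by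
      rw [hwsplit, Matrix.mulVec_add, add_dotProduct, dotProduct_add,
        dotProduct_add]
      ring
    have hsk : |s ^ k / (k.factorial : ℝ)| ≤ s ^ k := by
      rw [abs_of_nonneg (by positivity)]
      exact div_le_self (by positivity) hfk1
    have ht2 : |p s ⬝ᵥ M.mulVec es| ≤ card * cM * c₁ * s ^ (2 * k + 1) := by
      rw [hsym, hMp s, smul_dotProduct, smul_eq_mul, abs_mul]
      have h4 : |M.mulVec (u k) ⬝ᵥ es| ≤ card * cM * (c₁ * s ^ (k + 1)) := by
        calc |M.mulVec (u k) ⬝ᵥ es| ≤ card * ‖M.mulVec (u k)‖ * ‖es‖ := abs_dot_le _ _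
          _ ≤ card * cM * (c₁ * s ^ (k + 1)) := by
              rw [← hcM_def]
              exact mul_le_mul_of_nonneg_left hes (by positivity)
      calc |s ^ k / (k.factorial : ℝ)| * |M.mulVec (u k) ⬝ᵥ es|
          ≤ s ^ k * (card * cM * (c₁ * s ^ (k + 1))) :=
            mul_le_mul hsk h4 (abs_nonneg _) (by positivity)
        _ = card * cM * c₁ * s ^ (2 * k + 1) := by ring
    have ht3 : |es ⬝ᵥ M.mulVec (p s)| ≤ card * cM * c₁ * s ^ (2 * k + 1) := by
      rw [hMp s, dotProduct_smul, smul_eq_mul, abs_mul]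
      have h4 : |es ⬝ᵥ M.mulVec (u k)| ≤ card * (c₁ * s ^ (k + 1)) * cM := by
        calc |es ⬝ᵥ M.mulVec (u k)| ≤ card * ‖es‖ * ‖M.mulVec (u k)‖ := abs_dot_le _ _
          _ ≤ card * (c₁ * s ^ (k + 1)) * cM := by
              rw [← hcM_def]
              exact mul_le_mul_of_nonneg_right
                (mul_le_mul_of_nonneg_left hes hcard0) hcM0
      calc |s ^ k / (k.factorial : ℝ)| * |es ⬝ᵥ M.mulVec (u k)|
          ≤ s ^ k * (card * (c₁ * s ^ (k + 1)) * cM) :=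
            mul_le_mul hsk h4 (abs_nonneg _) (by positivity)
        _ = card * cM * c₁ * s ^ (2 * k + 1) := by ring
    have ht4 : |es ⬝ᵥ M.mulVec es| ≤ card * ‖M‖ * c₁ ^ 2 * s ^ (2 * k + 1) := by
      have hMes : ‖M.mulVec es‖ ≤ ‖M‖ * (c₁ * s ^ (k + 1)) :=
        le_trans (Matrix.linfty_opNorm_mulVec _ _)
          (mul_le_mul_of_nonneg_left hes (norm_nonneg _))
      calc |es ⬝ᵥ M.mulVec es| ≤ card * ‖es‖ * ‖M.mulVec es‖ := abs_dot_le _ _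
        _ ≤ card * (c₁ * s ^ (k + 1)) * (‖M‖ * (c₁ * s ^ (k + 1))) := by
            refine mul_le_mul (mul_le_mul_of_nonneg_left hes hcard0) hMes (norm_nonneg _) ?_
            positivity
        _ = card * ‖M‖ * c₁ ^ 2 * (s ^ (2 * k + 1) * s) := by ring
        _ ≤ card * ‖M‖ * c₁ ^ 2 * (s ^ (2 * k + 1) * 1) := by
            refine mul_le_mul_of_nonneg_left ?_ (by positivity)
            exact mul_le_mul_of_nonneg_left h1 (by positivity)
        _ = card * ‖M‖ * c₁ ^ 2 * s ^ (2 * k + 1) := by ring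
    rw [hexpand, hq1, add_sub_cancel_left]
    calc |p s ⬝ᵥ M.mulVec es + (es ⬝ᵥ M.mulVec (p s) + es ⬝ᵥ M.mulVec es)|
        ≤ |p s ⬝ᵥ M.mulVec es| + (|es ⬝ᵥ M.mulVec (p s)| + |es ⬝ᵥ M.mulVec es|) :=
          le_trans (abs_add_le _ _) (by gcongr; exact abs_add_le _ _)
      _ ≤ Cg * s ^ (2 * k + 1) := by rw [hCg_def]; nlinarith [ht2, ht3, ht4]
  -- rewrite the quadratic form as an integral
  have hswap : ∀ t : ℝ, ξ ⬝ᵥ (D t).mulVec ξ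
      = ∫ s in (0:ℝ)..t, ξ ⬝ᵥ (R s * M * (R s)ᵀ).mulVec ξ := by
    intro t
    have hint : ∀ (i j : Fin n ⊕ Fin n), IntervalIntegrable
        (fun s => ξ i * ((R s * M * (R s)ᵀ) i j * ξ j)) volume 0 t := fun i j =>
      (continuous_const.mul ((hcont.matrix_elem i j).mul continuous_const)).intervalIntegrable 0 t
    have hint2 : ∀ i : Fin n ⊕ Fin n, IntervalIntegrable
        (fun s => ∑ j, ξ i * ((R s * M * (R s)ᵀ) i j * ξ j)) volume 0 t := fun i =>
      (continuous_finset_sum _ fun j _ =>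
        continuous_const.mul ((hcont.matrix_elem i j).mul continuous_const)).intervalIntegrable 0 t
    rw [hD t]
    calc ξ ⬝ᵥ (Matrix.of fun i j => ∫ s in (0:ℝ)..t, (R s * M * (R s)ᵀ) i j).mulVec ξ
        = ∑ i, ∑ j, ∫ s in (0:ℝ)..t, ξ i * ((R s * M * (R s)ᵀ) i j * ξ j) := by
          simp only [dotProduct, Matrix.mulVec, Matrix.of_apply, Finset.mul_sum]
          exact Finset.sum_congr rfl fun i _ => Finset.sum_congr rfl fun j _ => by
            rw [← intervalIntegral.integral_mul_const, ← intervalIntegral.integral_const_mul]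
      _ = ∫ s in (0:ℝ)..t, ∑ i, ∑ j, ξ i * ((R s * M * (R s)ᵀ) i j * ξ j) := by
          rw [intervalIntegral.integral_finset_sum (fun i _ => hint2 i)]
          exact Finset.sum_congr rfl fun i _ =>
            (intervalIntegral.integral_finset_sum (fun j _ => hint i j)).symm
      _ = ∫ s in (0:ℝ)..t, ξ ⬝ᵥ (R s * M * (R s)ᵀ).mulVec ξ := by
          refine intervalIntegral.integral_congr fun s _ => ?_
          simp only [dotProduct, Matrix.mulVec, Finset.mul_sum]
  have hgw : ∀ s : ℝ, ξ ⬝ᵥ (R s * M * (R s)ᵀ).mulVec ξ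
      = ((R s)ᵀ.mulVec ξ) ⬝ᵥ M.mulVec ((R s)ᵀ.mulVec ξ) := by
    intro s
    rw [← Matrix.mulVec_mulVec, ← Matrix.mulVec_mulVec, Matrix.dotProduct_mulVec,
      ← Matrix.mulVec_transpose]
  have hgc : Continuous (fun s => ξ ⬝ᵥ (R s * M * (R s)ᵀ).mulVec ξ) := by
    have hfun : (fun s => ξ ⬝ᵥ (R s * M * (R s)ᵀ).mulVec ξ)
        = fun s => ∑ i, ∑ j, ξ i * ((R s * M * (R s)ᵀ) i j * ξ j) := by
      funext s
      simp only [dotProduct, Matrix.mulVec, Finset.mul_sum]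
    rw [hfun]
    exact continuous_finset_sum _ fun i _ => continuous_finset_sum _ fun j _ =>
      continuous_const.mul ((hcont.matrix_elem i j).mul continuous_const)
  -- assemble
  refine ⟨Cg + 1, 1, by linarith, one_pos, ?_⟩
  intro t ht0 ht1
  have hpc : Continuous (fun s : ℝ =>
      (u k ⬝ᵥ M.mulVec (u k)) / ((k.factorial : ℝ)) ^ 2 * s ^ (2 * k)) :=
    continuous_const.mul (continuous_pow _)
  have hint1 : IntervalIntegrable (fun s => ξ ⬝ᵥ (R s * M * (R s)ᵀ).mulVec ξ) volume 0 t :=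
    hgc.intervalIntegrable 0 t
  have hint2 : IntervalIntegrable (fun s : ℝ =>
      (u k ⬝ᵥ M.mulVec (u k)) / ((k.factorial : ℝ)) ^ 2 * s ^ (2 * k)) volume 0 t :=
    hpc.intervalIntegrable 0 t
  have hpoly : (∫ s in (0:ℝ)..t,
        (u k ⬝ᵥ M.mulVec (u k)) / ((k.factorial : ℝ)) ^ 2 * s ^ (2 * k))
      = (u k ⬝ᵥ M.mulVec (u k)) / ((2 * (k:ℝ) + 1) * ((k.factorial : ℝ)) ^ 2) * t ^ (2 * k + 1) := by
    rw [intervalIntegral.integral_const_mul, integral_pow]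
    have h2k : ((2 * k : ℕ) : ℝ) + 1 = 2 * (k:ℝ) + 1 := by push_cast; ring
    rw [h2k, zero_pow (by omega : 2 * k + 1 ≠ 0), sub_zero,
      show (u k ⬝ᵥ M.mulVec (u k)) / ((2 * (k:ℝ) + 1) * ((k.factorial : ℝ)) ^ 2)
          = (u k ⬝ᵥ M.mulVec (u k)) / ((k.factorial : ℝ)) ^ 2 / (2 * (k:ℝ) + 1) from by
        rw [div_div, mul_comm]]
    ring
  have hukq : (((Fᵀ) ^ k).mulVec ξ ⬝ᵥ M.mulVec (((Fᵀ) ^ k).mulVec ξ)) = u k ⬝ᵥ M.mulVec (u k) := by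
    rw [hu_def]
  have hkey : ξ ⬝ᵥ (D t).mulVec ξ -
        ((((Fᵀ) ^ k).mulVec ξ ⬝ᵥ M.mulVec (((Fᵀ) ^ k).mulVec ξ)) /
          ((2 * (k:ℝ) + 1) * ((k.factorial : ℝ)) ^ 2)) * t ^ (2 * k + 1)
      = ∫ s in (0:ℝ)..t, (ξ ⬝ᵥ (R s * M * (R s)ᵀ).mulVec ξ -
          (u k ⬝ᵥ M.mulVec (u k)) / ((k.factorial : ℝ)) ^ 2 * s ^ (2 * k)) := by
    rw [intervalIntegral.integral_sub hint1 hint2, hswap t, hpoly, hukq]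
  rw [hkey]
  calc |∫ s in (0:ℝ)..t, (ξ ⬝ᵥ (R s * M * (R s)ᵀ).mulVec ξ -
          (u k ⬝ᵥ M.mulVec (u k)) / ((k.factorial : ℝ)) ^ 2 * s ^ (2 * k))|
      ≤ ∫ s in (0:ℝ)..t, |ξ ⬝ᵥ (R s * M * (R s)ᵀ).mulVec ξ -
          (u k ⬝ᵥ M.mulVec (u k)) / ((k.factorial : ℝ)) ^ 2 * s ^ (2 * k)| :=
        intervalIntegral.abs_integral_le_integral_abs ht0
    _ ≤ ∫ s in (0:ℝ)..t, Cg * s ^ (2 * k + 1) := by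
        refine intervalIntegral.integral_mono_on ht0
          ((hint1.sub hint2).abs) ((continuous_const.mul (continuous_pow _)).intervalIntegrable 0 t)
          fun s hs => ?_
        rw [hgw s]
        exact hgb s hs.1 (le_trans hs.2 ht1)
    _ = Cg * (t ^ (2 * k + 2) / (2 * (k:ℝ) + 2)) := by
        rw [intervalIntegral.integral_const_mul, integral_pow]
        have h2 : ((2 * k + 1 : ℕ) : ℝ) + 1 = 2 * (k:ℝ) + 2 := by push_cast; ring
        rw [h2, zero_pow (by omega : 2 * k + 1 + 1 ≠ 0), sub_zero]
    _ ≤ (Cg + 1) * t ^ (2 * k + 2) := by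
        have htp : (0:ℝ) ≤ t ^ (2 * k + 2) := by positivity
        have hkc : (0:ℝ) ≤ (k:ℝ) := Nat.cast_nonneg k
        have hd : t ^ (2 * k + 2) / (2 * (k:ℝ) + 2) ≤ t ^ (2 * k + 2) :=
          div_le_self htp (by linarith)
        calc Cg * (t ^ (2 * k + 2) / (2 * (k:ℝ) + 2)) ≤ Cg * t ^ (2 * k + 2) :=
              mul_le_mul_of_nonneg_left hd hCg
          _ ≤ (Cg + 1) * t ^ (2 * k + 2) := by nlinarith
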